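/- The characteristic cone of a box-integer polyhedron P ⊆ ℝ^n is itself a box-integer polyhedron. -/
import Mathlib


open Set Pointwise

noncomputable section

/-- Embedding of integer vectors into real vectors. -/
def coeZ {n : ℕ} (z : Fin n → ℤ) : Fin n → ℝ := fun i => (z i : ℝ)

/-- A (nonempty) polyhedron: solution set of a finite system of linear inequalities. -/
def IsPolyhedron {n : ℕ} (P : Set (Fin n → ℝ)) : Prop :=
  P.Nonempty ∧ ∃ (m : ℕ) (A : Matrix (Fin m) (Fin n) ℝ) (b : Fin m → ℝ),
    P = {x | A.mulVec x ≤ b}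

/-- The integer points of a set `P ⊆ ℝ^n`. -/
def intPts {n : ℕ} (P : Set (Fin n → ℝ)) : Set (Fin n → ℝ) :=
  {x ∈ P | ∀ i, ∃ z : ℤ, x i = (z : ℝ)}

/-- The box `{x : l ≤ x ≤ u}` with integral bounds. -/
def intBox {n : ℕ} (l u : Fin n → ℤ) : Set (Fin n → ℝ) :=
  {x | ∀ i, (l i : ℝ) ≤ x i ∧ x i ≤ (u i : ℝ)}

/-- A set `P ⊆ ℝ^n` is box-integer if its intersection with every integral box,
whenever nonempty, equals the convex hull of its integer points. -/
def IsBoxInteger {n : ℕ} (P : Set (Fin n → ℝ)) : Prop :=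
  ∀ l u : Fin n → ℤ, l ≤ u → (P ∩ intBox l u).Nonempty →
    P ∩ intBox l u = convexHull ℝ (intPts (P ∩ intBox l u))

/-- A set closed under multiplication by nonnegative scalars. -/
def IsConeSet {n : ℕ} (C : Set (Fin n → ℝ)) : Prop :=
  ∀ x ∈ C, ∀ lam : ℝ, 0 ≤ lam → lam • x ∈ C

/-- The characteristic (recession) cone of `P`. -/
def charCone {n : ℕ} (P : Set (Fin n → ℝ)) : Set (Fin n → ℝ) :=
  {d | ∀ x ∈ P, x + d ∈ P}

/-- The integral neighborhood `N(x)` of a real vector `x`. -/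
def intNbhd {n : ℕ} (x : Fin n → ℝ) : Set (Fin n → ℤ) :=
  {z | ∀ i, |x i - (z i : ℝ)| < 1}

/-- The convex hull (in `ℝ^n`) of a set of integer vectors. -/
def convZ {n : ℕ} (S : Set (Fin n → ℤ)) : Set (Fin n → ℝ) :=
  convexHull ℝ (coeZ '' S)

/-- A nonempty set `S ⊆ ℤ^n` is integrally convex if every point `x` of its convex hull
belongs to the convex hull of `S ∩ N(x)`. -/
def IntegrallyConvex {n : ℕ} (S : Set (Fin n → ℤ)) : Prop :=
  S.Nonempty ∧ ∀ x ∈ convZ S, x ∈ convZ (S ∩ intNbhd x)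

/-- An L♮-convex polyhedron, given by its standard inequality description. -/
def IsLNatPolyhedron {n : ℕ} (P : Set (Fin n → ℝ)) : Prop :=
  P.Nonempty ∧ ∃ (I J : Set (Fin n)) (E : Set (Fin n × Fin n))
    (l u : Fin n → ℤ) (dd : Fin n × Fin n → ℤ),
    P = {x | (∀ i ∈ I, (l i : ℝ) ≤ x i) ∧ (∀ j ∈ J, x j ≤ (u j : ℝ)) ∧
             (∀ p ∈ E, x p.2 - x p.1 ≤ (dd p : ℝ))}

/-- An L²♮-convex polyhedron: the Minkowski sum of two L♮-convex polyhedra. -/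
def IsL2NatPolyhedron {n : ℕ} (P : Set (Fin n → ℝ)) : Prop :=
  ∃ P₁ P₂ : Set (Fin n → ℝ), IsLNatPolyhedron P₁ ∧ IsLNatPolyhedron P₂ ∧ P = P₁ + P₂

/-- An M♮-convex set of integer vectors (exchange axiom). -/
def IsMNatSet {n : ℕ} (S : Set (Fin n → ℤ)) : Prop :=
  S.Nonempty ∧ ∀ x ∈ S, ∀ y ∈ S, ∀ i : Fin n, y i < x i →
    ((x - Pi.single i 1 ∈ S ∧ y + Pi.single i 1 ∈ S) ∨
     ∃ j : Fin n, x j < y j ∧ x - Pi.single i 1 + Pi.single j 1 ∈ S ∧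
       y + Pi.single i 1 - Pi.single j 1 ∈ S)

/-- An M♮-convex polyhedron: the convex hull of an M♮-convex set. -/
def IsMNatPolyhedron {n : ℕ} (P : Set (Fin n → ℝ)) : Prop :=
  ∃ S : Set (Fin n → ℤ), IsMNatSet S ∧ P = convZ S

/-- An L♮-convex set of integer vectors (closed under componentwise
rounded-up and rounded-down midpoints). -/
def IsLNatSet {n : ℕ} (S : Set (Fin n → ℤ)) : Prop :=
  S.Nonempty ∧ ∀ x ∈ S, ∀ y ∈ S,
    (fun i => ⌈(x i + y i : ℚ) / 2⌉) ∈ S ∧ (fun i => ⌊(x i + y i : ℚ) / 2⌋) ∈ S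

/-- An L²♮-convex set: the Minkowski sum of two L♮-convex sets. -/
def IsL2NatSet {n : ℕ} (S : Set (Fin n → ℤ)) : Prop :=
  ∃ S₁ S₂ : Set (Fin n → ℤ), IsLNatSet S₁ ∧ IsLNatSet S₂ ∧ S = S₁ + S₂


open Matrix Filter Topology Polynomial
open scoped Classical

section CharConeAux
variable {n m : ℕ}

theorem charCone_rep (A : Matrix (Fin m) (Fin n) ℝ) (b : Fin m → ℝ)
    (hne : ({x | A.mulVec x ≤ b} : Set (Fin n → ℝ)).Nonempty) :
    {d : Fin n → ℝ | ∀ x ∈ {x : Fin n → ℝ | A.mulVec x ≤ b}, x + d ∈ {x : Fin n → ℝ | A.mulVec x ≤ b}}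
      = {d | A.mulVec d ≤ 0} := by
  ext d
  constructor
  · intro hd
    obtain ⟨x₀, hx₀⟩ := hne
    have hk : ∀ k : ℕ, x₀ + (k : ℝ) • d ∈ {x : Fin n → ℝ | A.mulVec x ≤ b} := by
      intro k
      induction k with
      | zero => simpa using hx₀
      | succ k ih =>
        have h2 := hd _ ih
        have : x₀ + ((k : ℝ) + 1) • d = x₀ + (k : ℝ) • d + d := by
          rw [add_smul, one_smul, ← add_assoc]
        rw [Nat.cast_succ, this]
        exact h2
    intro i
    show A.mulVec d i ≤ 0
    by_contra h
    push_neg at h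
    obtain ⟨k, hk'⟩ := exists_nat_gt ((b i - A.mulVec x₀ i) / A.mulVec d i)
    have h1 : A.mulVec (x₀ + (k : ℝ) • d) i ≤ b i := hk k i
    rw [Matrix.mulVec_add, Matrix.mulVec_smul] at h1
    have h1' : A.mulVec x₀ i + (k : ℝ) * A.mulVec d i ≤ b i := by
      simpa [smul_eq_mul] using h1
    rw [div_lt_iff₀ h] at hk'
    linarith
  · intro hd x hx i
    have : A.mulVec (x + d) i = A.mulVec x i + A.mulVec d i := by
      rw [Matrix.mulVec_add]; rfl
    have h2 : A.mulVec d i ≤ 0 := hd i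
    have h3 : A.mulVec x i ≤ b i := hx i
    rw [this]
    linarith


theorem charCone_rep' (A : Matrix (Fin m) (Fin n) ℝ) (b : Fin m → ℝ)
    (hne : ({x | A.mulVec x ≤ b} : Set (Fin n → ℝ)).Nonempty) :
    charCone {x : Fin n → ℝ | A.mulVec x ≤ b} = {d | A.mulVec d ≤ 0} := by
  have h := charCone_rep A b hne
  exact h

end CharConeAux

section Helpers
variable {n m : ℕ}

/-- the row functional as a linear map -/
def rowL (A : Matrix (Fin m) (Fin n) ℝ) (i : Fin m) : (Fin n → ℝ) →ₗ[ℝ] ℝ where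
  toFun x := A.mulVec x i
  map_add' x y := by simp only [Matrix.mulVec_add]; rfl
  map_smul' c x := by simp only [Matrix.mulVec_smul]; rfl

lemma rowL_cont (A : Matrix (Fin m) (Fin n) ℝ) (i : Fin m) : Continuous (rowL A i) :=
  (rowL A i).continuous_of_finiteDimensional

lemma isClosed_cone (A : Matrix (Fin m) (Fin n) ℝ) :
    IsClosed {d : Fin n → ℝ | A.mulVec d ≤ 0} := by
  have : {d : Fin n → ℝ | A.mulVec d ≤ 0} = ⋂ i, (rowL A i) ⁻¹' (Iic 0) := by
    ext d; simp [Pi.le_def, rowL]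
  rw [this]
  exact isClosed_iInter fun i => (isClosed_Iic).preimage (rowL_cont A i)

lemma convex_cone (A : Matrix (Fin m) (Fin n) ℝ) :
    Convex ℝ {d : Fin n → ℝ | A.mulVec d ≤ 0} := by
  have : {d : Fin n → ℝ | A.mulVec d ≤ 0} = ⋂ i, (rowL A i) ⁻¹' (Iic 0) := by
    ext d; simp [Pi.le_def, rowL]
  rw [this]
  exact convex_iInter fun i => (convex_Iic (0:ℝ)).linear_preimage (rowL A i)

lemma intBox_eq_Icc (l u : Fin n → ℤ) : intBox l u = Icc (coeZ l) (coeZ u) := by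
  ext x
  simp [intBox, coeZ, Pi.le_def, forall_and]

lemma convex_intBox (l u : Fin n → ℤ) : Convex ℝ (intBox l u) := by
  rw [intBox_eq_Icc]; exact convex_Icc _ _

lemma isClosed_intBox (l u : Fin n → ℤ) : IsClosed (intBox l u) := by
  rw [intBox_eq_Icc]; exact isClosed_Icc

lemma Ebox_finite (l u : Fin n → ℤ) : (intPts (intBox l u)).Finite := by
  have hsub : intPts (intBox l u) ⊆ coeZ '' (Set.univ.pi fun j => Icc (l j) (u j)) := by
    rintro e ⟨heB, heZ⟩
    choose z hz using heZ
    refine ⟨z, ?_, funext fun j => (hz j).symm⟩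
    intro j _
    have h1 := (heB j).1
    have h2 := (heB j).2
    rw [hz j] at h1 h2
    exact ⟨by exact_mod_cast h1, by exact_mod_cast h2⟩
  exact (Set.Finite.image _ (Set.Finite.pi fun j => Set.finite_Icc _ _)).subset hsub

end Helpers


section Eps
variable {n m : ℕ}

/-- wiggle lemma: at a point of the cone∩box, a direction that kills all tight
constraints can be added/subtracted with a small ε. -/
lemma eps_step (A : Matrix (Fin m) (Fin n) ℝ) (l u : Fin n → ℤ) (x w : Fin n → ℝ)
    (hx : A.mulVec x ≤ 0) (hxB : x ∈ intBox l u)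
    (hrow : ∀ i, A.mulVec x i = 0 → A.mulVec w i = 0)
    (hcoord : ∀ j, (x j = l j ∨ x j = u j) → w j = 0) :
    ∃ ε : ℝ, 0 < ε ∧ ∀ s : ℝ, |s| ≤ ε →
      (A.mulVec (x + s • w) ≤ 0 ∧ x + s • w ∈ intBox l u) := by
  set g : Fin m → ℝ := fun i =>
    if A.mulVec w i = 0 then 1 else (-(A.mulVec x i)) / |A.mulVec w i| with hg
  set h : Fin n → ℝ := fun j =>
    if w j = 0 then 1 else min ((u j : ℝ) - x j) (x j - l j) / |w j| with hh
  set S : Finset ℝ := insert 1 ((Finset.univ.image g) ∪ (Finset.univ.image h)) with hS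
  have hSne : S.Nonempty := ⟨1, Finset.mem_insert_self _ _⟩
  set ε := S.min' hSne with hε
  have hgpos : ∀ i, 0 < g i := by
    intro i
    by_cases hAw : A.mulVec w i = 0
    · simp [hg, hAw]
    · have hAx : A.mulVec x i ≠ 0 := fun h0 => hAw (hrow i h0)
      have hAx' : A.mulVec x i < 0 := lt_of_le_of_ne (hx i) hAx
      simp only [hg, if_neg hAw]
      exact div_pos (by linarith) (abs_pos.mpr hAw)
  have hhpos : ∀ j, 0 < h j := by
    intro j
    by_cases hw : w j = 0
    · simp [hh, hw]
    · have hne : ¬(x j = l j ∨ x j = u j) := fun hc => hw (hcoord j hc)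
      push_neg at hne
      have h1 := (hxB j).1
      have h2 := (hxB j).2
      have h1' : (l j : ℝ) < x j := lt_of_le_of_ne h1 (Ne.symm hne.1)
      have h2' : x j < (u j : ℝ) := lt_of_le_of_ne h2 hne.2
      simp only [hh, if_neg hw]
      exact div_pos (lt_min (by linarith) (by linarith)) (abs_pos.mpr hw)
  have hεpos : 0 < ε := by
    rw [hε, Finset.lt_min'_iff]
    intro y hy
    rcases Finset.mem_insert.mp hy with rfl | hy'
    · norm_num
    rcases Finset.mem_union.mp hy' with hy'' | hy''
    · obtain ⟨i, _, rfl⟩ := Finset.mem_image.mp hy''; exact hgpos i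
    · obtain ⟨j, _, rfl⟩ := Finset.mem_image.mp hy''; exact hhpos j
  refine ⟨ε, hεpos, fun s hs => ⟨?_, ?_⟩⟩
  · intro i
    show A.mulVec (x + s • w) i ≤ 0
    have hexp : A.mulVec (x + s • w) i = A.mulVec x i + s * A.mulVec w i := by
      rw [Matrix.mulVec_add, Matrix.mulVec_smul]; simp [smul_eq_mul]
    rw [hexp]
    by_cases hAw : A.mulVec w i = 0
    · rw [hAw]; simpa using hx i
    · have hεg : ε ≤ g i := Finset.min'_le _ _ (by
        apply Finset.mem_insert_of_mem
        exact Finset.mem_union_left _ (Finset.mem_image_of_mem g (Finset.mem_univ i)))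
      have habs : |s * A.mulVec w i| ≤ -(A.mulVec x i) := by
        rw [abs_mul]
        calc |s| * |A.mulVec w i| ≤ ε * |A.mulVec w i| := by
              apply mul_le_mul_of_nonneg_right hs (abs_nonneg _)
          _ ≤ g i * |A.mulVec w i| := by
              apply mul_le_mul_of_nonneg_right hεg (abs_nonneg _)
          _ = -(A.mulVec x i) := by
              simp only [hg, if_neg hAw]
              rw [div_mul_cancel₀]
              exact ne_of_gt (abs_pos.mpr hAw)
      have := neg_abs_le (s * A.mulVec w i)
      have := le_abs_self (s * A.mulVec w i)
      linarith
  · intro j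
    have hexp : (x + s • w) j = x j + s * w j := by simp [smul_eq_mul]
    rw [hexp]
    by_cases hw : w j = 0
    · rw [hw]; simpa using hxB j
    · have hεh : ε ≤ h j := Finset.min'_le _ _ (by
        apply Finset.mem_insert_of_mem
        exact Finset.mem_union_right _ (Finset.mem_image_of_mem h (Finset.mem_univ j)))
      have habs : |s * w j| ≤ min ((u j : ℝ) - x j) (x j - l j) := by
        rw [abs_mul]
        calc |s| * |w j| ≤ ε * |w j| := mul_le_mul_of_nonneg_right hs (abs_nonneg _)
          _ ≤ h j * |w j| := mul_le_mul_of_nonneg_right hεh (abs_nonneg _)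
          _ = min ((u j : ℝ) - x j) (x j - l j) := by
              simp only [hh, if_neg hw]
              rw [div_mul_cancel₀]
              exact ne_of_gt (abs_pos.mpr hw)
      have h1 := le_abs_self (s * w j)
      have h2 := neg_abs_le (s * w j)
      have h3 := min_le_left ((u j : ℝ) - x j) (x j - l j)
      have h4 := min_le_right ((u j : ℝ) - x j) (x j - l j)
      constructor <;> linarith

end Eps


section Main
variable {n m : ℕ}


variable {n m : ℕ}

/-- generic positive parameter avoiding finitely many polynomial relations -/
lemma exists_generic (E : Set (Fin n → ℝ)) (hE : E.Finite)
    (α : (Fin n → ℝ) → ℝ) (β : (Fin n → ℝ) → Fin m → ℝ) (R : Finset (Fin m)) :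
    ∃ t : ℝ, 0 < t ∧ ∀ e ∈ E,
      α e + ∑ i ∈ R, t ^ ((i : ℕ) + 1) * β e i = 0 →
      (α e = 0 ∧ ∀ i ∈ R, β e i = 0) := by
  set p : (Fin n → ℝ) → Polynomial ℝ :=
    fun e => C (α e) + ∑ i ∈ R, monomial ((i : ℕ) + 1) (β e i) with hp
  have hcoeff0 : ∀ e, (p e).coeff 0 = α e := by
    intro e
    simp [hp, Polynomial.finset_sum_coeff, coeff_monomial]
  have hcoeffi : ∀ e, ∀ i ∈ R, (p e).coeff ((i : ℕ) + 1) = β e i := by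
    intro e i hi
    simp only [hp, coeff_add, coeff_C, Polynomial.finset_sum_coeff, coeff_monomial]
    rw [if_neg (by omega), zero_add]
    rw [Finset.sum_eq_single i]
    · simp
    · intro i' _ hne
      rw [if_neg]
      intro hc
      exact hne (Fin.val_injective (by omega))
    · intro hc; exact absurd hi hc
  have heval : ∀ e t, (p e).eval t = α e + ∑ i ∈ R, t ^ ((i : ℕ) + 1) * β e i := by
    intro e t
    simp only [hp, eval_add, eval_C, eval_finset_sum, eval_monomial]
    congr 1
    apply Finset.sum_congr rfl
    intro i _
    ring
  have hbadfin : ∀ e, {t : ℝ | p e ≠ 0 ∧ (p e).IsRoot t}.Finite := by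
    intro e
    by_cases h : p e = 0
    · simp [h]
    · exact (Polynomial.finite_setOf_isRoot h).subset fun t ht => ht.2
  set Bad : Set ℝ := ⋃ e ∈ E, {t : ℝ | p e ≠ 0 ∧ (p e).IsRoot t} with hBad
  have hBadfin : Bad.Finite := Set.Finite.biUnion hE fun e _ => hbadfin e
  have hne : (Ioi (0:ℝ) \ Bad).Nonempty := ((Set.Ioi_infinite 0).diff hBadfin).nonempty
  obtain ⟨t, ht⟩ := hne
  refine ⟨t, ht.1, fun e he hsum => ?_⟩
  have hroot : (p e).IsRoot t := by rw [IsRoot, heval]; exact hsum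
  have hpe : p e = 0 := by
    by_contra hpe
    exact ht.2 (Set.mem_biUnion he ⟨hpe, hroot⟩)
  constructor
  · rw [← hcoeff0 e, hpe]; simp
  · intro i hi; rw [← hcoeffi e i hi, hpe]; simp







lemma exists_int_point (A : Matrix (Fin m) (Fin n) ℝ) (b : Fin m → ℝ)
    (hPne : ({x : Fin n → ℝ | A.mulVec x ≤ b}).Nonempty)
    (hbox : IsBoxInteger {x : Fin n → ℝ | A.mulVec x ≤ b}) :
    ∃ z : Fin n → ℤ, A.mulVec (coeZ z) ≤ b := by
  obtain ⟨x, hx⟩ := hPne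
  have hlu : (fun j => ⌊x j⌋) ≤ (fun j => ⌈x j⌉) := fun j =>
    (Int.floor_le_ceil (x j))
  have hxB : x ∈ intBox (fun j => ⌊x j⌋) (fun j => ⌈x j⌉) :=
    fun j => ⟨Int.floor_le (x j), Int.le_ceil (x j)⟩
  have key := hbox _ _ hlu ⟨x, hx, hxB⟩
  have hxm : x ∈ convexHull ℝ (intPts ({x : Fin n → ℝ | A.mulVec x ≤ b} ∩
      intBox (fun j => ⌊x j⌋) (fun j => ⌈x j⌉))) := by
    rw [← key]; exact ⟨hx, hxB⟩
  have hSne : (intPts ({x : Fin n → ℝ | A.mulVec x ≤ b} ∩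
      intBox (fun j => ⌊x j⌋) (fun j => ⌈x j⌉))).Nonempty := by
    by_contra hS
    rw [Set.not_nonempty_iff_eq_empty] at hS
    rw [hS, convexHull_empty] at hxm
    exact hxm
  obtain ⟨w, hw⟩ := hSne
  choose z hz using hw.2
  exact ⟨z, by
    have : coeZ z = w := funext fun j => (hz j).symm
    rw [this]; exact hw.1.1⟩

lemma walk_step (A : Matrix (Fin m) (Fin n) ℝ) (b : Fin m → ℝ)
    (hbox : IsBoxInteger {x : Fin n → ℝ | A.mulVec x ≤ b}) (l u : Fin n → ℤ) (hlu : l ≤ u)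
    (v : Fin n → ℝ) (hvC : A.mulVec v ≤ 0) (hvB : v ∈ intBox l u)
    (c : (Fin n → ℝ) →ₗ[ℝ] ℝ) (z : Fin n → ℤ) (hz : A.mulVec (coeZ z) ≤ b) :
    ∃ z' : Fin n → ℤ, A.mulVec (coeZ z') ≤ b ∧
      (coeZ z' - coeZ z) ∈ intPts (intBox l u) ∧ c v ≤ c (coeZ z' - coeZ z) := by
  set l' : Fin n → ℤ := fun j => z j + l j with hl'
  set u' : Fin n → ℤ := fun j => z j + u j with hu'
  have hlu' : l' ≤ u' := fun j => by
    have hj : l j ≤ u j := hlu j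
    simp only [hl', hu']
    omega
  have hmemP : A.mulVec (coeZ z + v) ≤ b := by
    intro i
    have h1 : A.mulVec (coeZ z + v) i = A.mulVec (coeZ z) i + A.mulVec v i := by
      rw [Matrix.mulVec_add]; rfl
    have := hz i; have := hvC i
    rw [h1]
    have hv0 : A.mulVec v i ≤ 0 := hvC i
    linarith [hz i]
  have hmemB : coeZ z + v ∈ intBox l' u' := by
    intro j
    have h1 := (hvB j).1
    have h2 := (hvB j).2
    constructor
    · show ((z j + l j : ℤ) : ℝ) ≤ coeZ z j + v j
      push_cast
      show (z j : ℝ) + l j ≤ (z j : ℝ) + v j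
      linarith
    · show coeZ z j + v j ≤ ((z j + u j : ℤ) : ℝ)
      push_cast
      show (z j : ℝ) + v j ≤ (z j : ℝ) + u j
      linarith
  have key := hbox l' u' hlu' ⟨coeZ z + v, hmemP, hmemB⟩
  have hxm : coeZ z + v ∈ convexHull ℝ
      (intPts ({x : Fin n → ℝ | A.mulVec x ≤ b} ∩ intBox l' u')) := by
    rw [← key]; exact ⟨hmemP, hmemB⟩
  by_contra hno
  push_neg at hno
  have hsub : intPts ({x : Fin n → ℝ | A.mulVec x ≤ b} ∩ intBox l' u') ⊆
      c ⁻¹' (Iio (c (coeZ z) + c v)) := by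
    rintro w ⟨⟨hwP, hwB⟩, hwZ⟩
    choose zw hzw using hwZ
    have hwz : coeZ zw = w := funext fun j => (hzw j).symm
    have hwP' : A.mulVec (coeZ zw) ≤ b := by rw [hwz]; exact hwP
    have hwBox : (coeZ zw - coeZ z) ∈ intPts (intBox l u) := by
      constructor
      · intro j
        have h1 := (hwB j).1
        have h2 := (hwB j).2
        rw [← hwz] at h1 h2
        constructor
        · show (l j : ℝ) ≤ coeZ zw j - coeZ z j
          have : ((z j + l j : ℤ) : ℝ) ≤ coeZ zw j := h1
          push_cast at this ⊢
          simp only [coeZ] at *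
          linarith
        · show coeZ zw j - coeZ z j ≤ (u j : ℝ)
          have : coeZ zw j ≤ ((z j + u j : ℤ) : ℝ) := h2
          push_cast at this ⊢
          simp only [coeZ] at *
          linarith
      · intro j
        exact ⟨zw j - z j, by simp [coeZ]⟩
    have hlt := hno zw hwP' hwBox
    have : c w = c (coeZ zw - coeZ z) + c (coeZ z) := by
      rw [← hwz, map_sub]; ring
    simp only [Set.mem_preimage, Set.mem_Iio]
    rw [this]
    linarith
  have hconv : Convex ℝ (c ⁻¹' (Iio (c (coeZ z) + c v))) :=
    (convex_Iio _).linear_preimage c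
  have := convexHull_min hsub hconv hxm
  simp only [Set.mem_preimage, Set.mem_Iio, map_add] at this
  linarith




set_option maxHeartbeats 1600000 in
/-- MAIN RANK LEMMA: a point of the cone∩box whose tight constraints have full rank
is integral. -/
theorem main_rank (A : Matrix (Fin m) (Fin n) ℝ) (b : Fin m → ℝ)
    (hPne : ({x : Fin n → ℝ | A.mulVec x ≤ b}).Nonempty)
    (hbox : IsBoxInteger {x : Fin n → ℝ | A.mulVec x ≤ b})
    (l u : Fin n → ℤ) (hlu : l ≤ u) (v : Fin n → ℝ)
    (hvC : A.mulVec v ≤ 0) (hvB : v ∈ intBox l u)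
    (hrank : ∀ w : Fin n → ℝ, (∀ i, A.mulVec v i = 0 → A.mulVec w i = 0) →
        (∀ j, (v j = (l j : ℝ) ∨ v j = (u j : ℝ)) → w j = 0) → w = 0) :
    ∀ j, ∃ z : ℤ, v j = (z : ℝ) := by
  set R : Finset (Fin m) := Finset.univ.filter (fun i => A.mulVec v i = 0) with hR
  set Jp : Finset (Fin n) := Finset.univ.filter (fun j => v j = (u j : ℝ)) with hJp
  set Jm : Finset (Fin n) :=
    Finset.univ.filter (fun j => v j = (l j : ℝ) ∧ v j ≠ (u j : ℝ)) with hJm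
  have hEfin := Ebox_finite l u
  set α : (Fin n → ℝ) → ℝ := fun e =>
    (∑ j ∈ Jp, e j - ∑ j ∈ Jm, e j) - (∑ j ∈ Jp, (u j : ℝ) - ∑ j ∈ Jm, (l j : ℝ)) with hα
  set β : (Fin n → ℝ) → Fin m → ℝ := fun e i => A.mulVec e i with hβ
  obtain ⟨t, ht0, hgen⟩ := exists_generic (intPts (intBox l u)) hEfin α β R
  set chat : (Fin n → ℝ) →ₗ[ℝ] ℝ :=
    (∑ j ∈ Jp, LinearMap.proj j) - (∑ j ∈ Jm, LinearMap.proj j)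
      + ∑ i ∈ R, t ^ ((i : ℕ) + 1) • rowL A i with hchat
  have chat_apply : ∀ x : Fin n → ℝ, chat x =
      ∑ j ∈ Jp, x j - ∑ j ∈ Jm, x j + ∑ i ∈ R, t ^ ((i : ℕ) + 1) * A.mulVec x i := by
    intro x
    simp [hchat, LinearMap.sub_apply, LinearMap.add_apply, LinearMap.coe_sum,
      Finset.sum_apply, LinearMap.smul_apply, LinearMap.proj_apply, rowL, smul_eq_mul]
  have chat_v : chat v = ∑ j ∈ Jp, (u j : ℝ) - ∑ j ∈ Jm, (l j : ℝ) := by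
    rw [chat_apply]
    have h3 : ∑ i ∈ R, t ^ ((i : ℕ) + 1) * A.mulVec v i = 0 := by
      apply Finset.sum_eq_zero
      intro i hi
      rw [hR, Finset.mem_filter] at hi
      rw [hi.2, mul_zero]
    rw [h3, add_zero]
    congr 1
    · apply Finset.sum_congr rfl
      intro j hj; rw [hJp, Finset.mem_filter] at hj; exact hj.2
    · apply Finset.sum_congr rfl
      intro j hj; rw [hJm, Finset.mem_filter] at hj; exact hj.2.1
  have hchatle : ∀ d : Fin n → ℝ, d ∈ intBox l u →
      (∀ i, A.mulVec v i = 0 → A.mulVec d i ≤ 0) → chat d ≤ chat v := by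
    intro d hdB hdC
    rw [chat_apply, chat_v]
    have h1 : ∑ j ∈ Jp, d j ≤ ∑ j ∈ Jp, (u j : ℝ) :=
      Finset.sum_le_sum fun j _ => (hdB j).2
    have h2 : ∑ j ∈ Jm, (l j : ℝ) ≤ ∑ j ∈ Jm, d j :=
      Finset.sum_le_sum fun j _ => (hdB j).1
    have h3 : ∑ i ∈ R, t ^ ((i : ℕ) + 1) * A.mulVec d i ≤ 0 := by
      apply Finset.sum_nonpos
      intro i hi
      rw [hR, Finset.mem_filter] at hi
      exact mul_nonpos_of_nonneg_of_nonpos (le_of_lt (pow_pos ht0 _)) (hdC i hi.2)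
    linarith
  -- KEY: existence of an integral point e of the box with chat e = chat v
  have hkey : ∃ e ∈ intPts (intBox l u), chat e = chat v := by
    by_contra hno
    push_neg at hno
    obtain ⟨z₀, hz₀⟩ := exists_int_point A b hPne hbox
    obtain ⟨z₁, hz₁P, hz₁B, hz₁c⟩ := walk_step A b hbox l u hlu v hvC hvB chat z₀ hz₀
    set F : Finset (Fin n → ℝ) := hEfin.toFinset.filter (fun e => chat v < chat e) with hF
    have hFmem : ∀ e ∈ intPts (intBox l u), chat v ≤ chat e → e ∈ F := by
      intro e he hle
      rw [hF, Finset.mem_filter]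
      exact ⟨hEfin.mem_toFinset.mpr he, lt_of_le_of_ne hle (Ne.symm (hno e he))⟩
    have hFne : F.Nonempty := ⟨_, hFmem _ hz₁B hz₁c⟩
    set δ : ℝ := (F.image (fun e => chat e - chat v)).min' (hFne.image _) with hδ
    have hδpos : 0 < δ := by
      rw [hδ, Finset.lt_min'_iff]
      intro y hy
      obtain ⟨e, he, rfl⟩ := Finset.mem_image.mp hy
      rw [hF, Finset.mem_filter] at he
      linarith [he.2]
    have hstepδ : ∀ e ∈ intPts (intBox l u), chat v ≤ chat e → chat v + δ ≤ chat e := by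
      intro e he hle
      have h1 : δ ≤ chat e - chat v :=
        Finset.min'_le _ _ (Finset.mem_image_of_mem _ (hFmem e he hle))
      linarith
    have hmain : ∀ k : ℕ, ∃ z : Fin n → ℤ, A.mulVec (coeZ z) ≤ b ∧
        (∀ j, (k : ℤ) * l j ≤ z j - z₀ j ∧ z j - z₀ j ≤ (k : ℤ) * u j) ∧
        (k : ℝ) * (chat v + δ) ≤ chat (coeZ z - coeZ z₀) := by
      intro k
      induction k with
      | zero => exact ⟨z₀, hz₀, fun j => by simp, by simp⟩
      | succ k ih =>
        obtain ⟨z, hzP, hzB, hzc⟩ := ih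
        obtain ⟨z', hz'P, hz'B, hz'c⟩ := walk_step A b hbox l u hlu v hvC hvB chat z hzP
        have hez : ∀ j, l j ≤ z' j - z j ∧ z' j - z j ≤ u j := by
          intro j
          have h1 := (hz'B.1 j).1
          have h2 := (hz'B.1 j).2
          constructor
          · have : (l j : ℝ) ≤ ((z' j - z j : ℤ) : ℝ) := by
              push_cast; simpa [coeZ] using h1
            exact_mod_cast this
          · have : ((z' j - z j : ℤ) : ℝ) ≤ (u j : ℝ) := by
              push_cast; simpa [coeZ] using h2
            exact_mod_cast this
        refine ⟨z', hz'P, ?_, ?_⟩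
        · intro j
          have h1 := (hzB j).1
          have h2 := (hzB j).2
          have h3 := (hez j).1
          have h4 := (hez j).2
          constructor
          · push_cast [Nat.cast_succ]; nlinarith [h1, h3]
          · push_cast [Nat.cast_succ]; nlinarith [h2, h4]
        · have hδe : chat v + δ ≤ chat (coeZ z' - coeZ z) := hstepδ _ hz'B hz'c
          have hsplit : chat (coeZ z' - coeZ z₀) =
              chat (coeZ z - coeZ z₀) + chat (coeZ z' - coeZ z) := by
            rw [← map_add]
            congr 1
            abel
          rw [hsplit]
          push_cast [Nat.cast_succ]
          linarith
    choose Z hZ using hmain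
    set y : ℕ → (Fin n → ℝ) :=
      fun k => ((k : ℝ) + 1)⁻¹ • (coeZ (Z (k + 1)) - coeZ z₀) with hy
    have hkpos : ∀ k : ℕ, (0 : ℝ) < (k : ℝ) + 1 := fun k => by positivity
    have hyB : ∀ k, y k ∈ Icc (coeZ l) (coeZ u) := by
      intro k
      constructor <;> intro j
      · have h1 := ((hZ (k + 1)).2.1 j).1
        have h1' : ((k : ℝ) + 1) * (l j : ℝ) ≤ coeZ (Z (k + 1)) j - coeZ z₀ j := by
          have : (((k + 1 : ℕ) : ℤ) * l j : ℤ) ≤ (Z (k + 1) j - z₀ j : ℤ) := by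
            exact_mod_cast h1
          calc ((k : ℝ) + 1) * (l j : ℝ) = (((k + 1 : ℕ) : ℤ) * l j : ℤ) := by push_cast; ring
            _ ≤ ((Z (k + 1) j - z₀ j : ℤ) : ℝ) := by exact_mod_cast this
            _ = coeZ (Z (k + 1)) j - coeZ z₀ j := by push_cast [coeZ]; ring
        show coeZ l j ≤ ((k : ℝ) + 1)⁻¹ * (coeZ (Z (k + 1)) j - coeZ z₀ j)
        rw [le_inv_mul_iff₀ (hkpos k)]
        calc ((k : ℝ) + 1) * coeZ l j = ((k : ℝ) + 1) * (l j : ℝ) := rfl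
          _ ≤ _ := h1'
      · have h2 := ((hZ (k + 1)).2.1 j).2
        have h2' : coeZ (Z (k + 1)) j - coeZ z₀ j ≤ ((k : ℝ) + 1) * (u j : ℝ) := by
          have : (Z (k + 1) j - z₀ j : ℤ) ≤ (((k + 1 : ℕ) : ℤ) * u j : ℤ) := by
            exact_mod_cast h2
          calc coeZ (Z (k + 1)) j - coeZ z₀ j = ((Z (k + 1) j - z₀ j : ℤ) : ℝ) := by
                push_cast [coeZ]; ring
            _ ≤ (((k + 1 : ℕ) : ℤ) * u j : ℤ) := by exact_mod_cast this
            _ = ((k : ℝ) + 1) * (u j : ℝ) := by push_cast; ring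
        show ((k : ℝ) + 1)⁻¹ * (coeZ (Z (k + 1)) j - coeZ z₀ j) ≤ coeZ u j
        rw [inv_mul_le_iff₀ (hkpos k)]
        calc coeZ (Z (k + 1)) j - coeZ z₀ j ≤ ((k : ℝ) + 1) * (u j : ℝ) := h2'
          _ = ((k : ℝ) + 1) * coeZ u j := rfl
    have hyc : ∀ k, chat v + δ ≤ chat (y k) := by
      intro k
      have h1 := (hZ (k + 1)).2.2
      have : chat (y k) = ((k : ℝ) + 1)⁻¹ * chat (coeZ (Z (k + 1)) - coeZ z₀) := by
        rw [hy]; simp [_root_.map_smul, smul_eq_mul]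
      rw [this]
      rw [le_inv_mul_iff₀ (hkpos k)]
      calc ((k : ℝ) + 1) * (chat v + δ) = ((k + 1 : ℕ) : ℝ) * (chat v + δ) := by push_cast; ring
        _ ≤ _ := h1
    have hyA : ∀ k i, A.mulVec (y k) i ≤ ((k : ℝ) + 1)⁻¹ * (b i - A.mulVec (coeZ z₀) i) := by
      intro k i
      have h1 : A.mulVec (y k) i =
          ((k : ℝ) + 1)⁻¹ * (A.mulVec (coeZ (Z (k + 1))) i - A.mulVec (coeZ z₀) i) := by
        rw [hy]
        rw [Matrix.mulVec_smul, Matrix.mulVec_sub]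
        simp [smul_eq_mul]
      rw [h1]
      apply mul_le_mul_of_nonneg_left _ (le_of_lt (inv_pos.mpr (hkpos k)))
      have := (hZ (k + 1)).1 i
      linarith
    obtain ⟨ylim, hylim, φ, hφmono, hφconv⟩ := (isCompact_Icc).tendsto_subseq hyB
    have hylimC : ∀ i, A.mulVec ylim i ≤ 0 := by
      intro i
      have hc : Tendsto (fun q => rowL A i (y (φ q))) atTop (𝓝 (rowL A i ylim)) :=
        ((rowL_cont A i).continuousAt.tendsto).comp hφconv
      set C : ℝ := |b i - A.mulVec (coeZ z₀) i| with hC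
      have hub : Tendsto (fun q : ℕ => C / ((q : ℝ) + 1)) atTop (𝓝 0) := by
        have h := tendsto_const_div_atTop_nhds_zero_nat C
        have h2 : Tendsto (fun q : ℕ => C / ((q + 1 : ℕ) : ℝ)) atTop (𝓝 0) :=
          h.comp (tendsto_add_atTop_nat 1)
        simpa [Nat.cast_add] using h2
      have hbound : ∀ q : ℕ, rowL A i (y (φ q)) ≤ C / ((q : ℝ) + 1) := by
        intro q
        have h1 : rowL A i (y (φ q)) ≤ ((φ q : ℝ) + 1)⁻¹ * (b i - A.mulVec (coeZ z₀) i) :=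
          hyA (φ q) i
        have hq1 : (0:ℝ) < (q : ℝ) + 1 := by positivity
        have hq2 : (0:ℝ) < (φ q : ℝ) + 1 := by positivity
        have hqle : ((q : ℝ) + 1) ≤ ((φ q : ℝ) + 1) := by
          have h0 : q ≤ φ q := hφmono.le_apply
          have : (q : ℝ) ≤ (φ q : ℝ) := by exact_mod_cast h0
          linarith
        have h2 : ((φ q : ℝ) + 1)⁻¹ * (b i - A.mulVec (coeZ z₀) i) ≤ C / ((φ q : ℝ) + 1) := by
          rw [inv_mul_eq_div]
          gcongr
          exacts [le_abs_self _]
        have h3 : C / ((φ q : ℝ) + 1) ≤ C / ((q : ℝ) + 1) := by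
          gcongr
        linarith
      have := le_of_tendsto_of_tendsto hc hub (Filter.Eventually.of_forall hbound)
      simpa [rowL] using this
    have hylimc : chat v + δ ≤ chat ylim := by
      have hc : Tendsto (fun q => chat (y (φ q))) atTop (𝓝 (chat ylim)) :=
        ((chat.continuous_of_finiteDimensional).continuousAt.tendsto).comp hφconv
      exact le_of_tendsto_of_tendsto tendsto_const_nhds hc
        (Filter.Eventually.of_forall fun q => hyc (φ q))
    have hle := hchatle ylim (by rw [intBox_eq_Icc]; exact hylim) (fun i _ => hylimC i)
    linarith
  obtain ⟨e, heE, hec⟩ := hkey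
  -- genericity: all coefficients vanish
  have hsum : α e + ∑ i ∈ R, t ^ ((i : ℕ) + 1) * β e i = 0 := by
    have h1 := chat_apply e
    rw [hec, chat_v] at h1
    rw [hα, hβ]
    simp only
    linarith [h1]
  obtain ⟨hα0, hβ0⟩ := hgen e heE hsum
  -- per-coordinate tightness on Jp and Jm
  have hJptight : ∀ j ∈ Jp, e j = (u j : ℝ) := by
    intro j hj
    have hS : ∑ j ∈ Jp, ((u j : ℝ) - e j) + ∑ j ∈ Jm, (e j - (l j : ℝ)) = 0 := by
      rw [hα] at hα0
      simp only at hα0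
      rw [Finset.sum_sub_distrib, Finset.sum_sub_distrib]
      linarith
    have h1 : ∀ j ∈ Jp, 0 ≤ (u j : ℝ) - e j := fun j _ => by
      have := (heE.1 j).2; linarith
    have h2 : ∀ j ∈ Jm, 0 ≤ e j - (l j : ℝ) := fun j _ => by
      have := (heE.1 j).1; linarith
    have hS1 : ∑ j ∈ Jp, ((u j : ℝ) - e j) = 0 := by
      have hn1 : 0 ≤ ∑ j ∈ Jp, ((u j : ℝ) - e j) := Finset.sum_nonneg h1
      have hn2 : 0 ≤ ∑ j ∈ Jm, (e j - (l j : ℝ)) := Finset.sum_nonneg h2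
      linarith
    have := (Finset.sum_eq_zero_iff_of_nonneg h1).mp hS1 j hj
    linarith
  have hJmtight : ∀ j ∈ Jm, e j = (l j : ℝ) := by
    intro j hj
    have hS : ∑ j ∈ Jp, ((u j : ℝ) - e j) + ∑ j ∈ Jm, (e j - (l j : ℝ)) = 0 := by
      rw [hα] at hα0
      simp only at hα0
      rw [Finset.sum_sub_distrib, Finset.sum_sub_distrib]
      linarith
    have h1 : ∀ j ∈ Jp, 0 ≤ (u j : ℝ) - e j := fun j _ => by
      have := (heE.1 j).2; linarith
    have h2 : ∀ j ∈ Jm, 0 ≤ e j - (l j : ℝ) := fun j _ => by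
      have := (heE.1 j).1; linarith
    have hS2 : ∑ j ∈ Jm, (e j - (l j : ℝ)) = 0 := by
      have hn1 : 0 ≤ ∑ j ∈ Jp, ((u j : ℝ) - e j) := Finset.sum_nonneg h1
      have hn2 : 0 ≤ ∑ j ∈ Jm, (e j - (l j : ℝ)) := Finset.sum_nonneg h2
      linarith
    have := (Finset.sum_eq_zero_iff_of_nonneg h2).mp hS2 j hj
    linarith
  have hev : e - v = 0 := by
    apply hrank
    · intro i hi
      have hiR : i ∈ R := by rw [hR, Finset.mem_filter]; exact ⟨Finset.mem_univ i, hi⟩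
      have h1 : A.mulVec (e - v) i = A.mulVec e i - A.mulVec v i := by
        rw [Matrix.mulVec_sub]; rfl
      rw [h1, hi, sub_zero]
      exact hβ0 i hiR
    · intro j hj
      have hej : e j = v j := by
        rcases hj with hl | hu
        · by_cases hu' : v j = (u j : ℝ)
          · have hjp : j ∈ Jp := by rw [hJp, Finset.mem_filter]; exact ⟨Finset.mem_univ j, hu'⟩
            rw [hJptight j hjp, hu']
          · have hjm : j ∈ Jm := by
              rw [hJm, Finset.mem_filter]; exact ⟨Finset.mem_univ j, hl, hu'⟩
            rw [hJmtight j hjm, hl]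
        · have hjp : j ∈ Jp := by rw [hJp, Finset.mem_filter]; exact ⟨Finset.mem_univ j, hu⟩
          rw [hJptight j hjp, hu]
      show (e - v) j = 0
      simp [hej]
  have : v = e := by
    have := sub_eq_zero.mp hev
    exact this.symm ▸ rfl
  intro j
  obtain ⟨z, hz⟩ := heE.2 j
  exact ⟨z, by rw [this]; exact hz⟩


/-- endpoint of the free segment gains a new tight constraint -/
lemma endpoint (A : Matrix (Fin m) (Fin n) ℝ) (l u : Fin n → ℤ) (v w : Fin n → ℝ)
    (hvC : A.mulVec v ≤ 0) (hvB : v ∈ intBox l u)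
    (hw_rows : ∀ i, A.mulVec v i = 0 → A.mulVec w i = 0)
    (hw_coords : ∀ j, (v j = (l j : ℝ) ∨ v j = (u j : ℝ)) → w j = 0)
    (hwne : w ≠ 0) :
    ∃ s : ℝ, 0 < s ∧ A.mulVec (v + s • w) ≤ 0 ∧ v + s • w ∈ intBox l u ∧
      ((∃ i, A.mulVec (v + s • w) i = 0 ∧ A.mulVec v i ≠ 0) ∨
       (∃ j, ((v + s • w) j = (l j : ℝ) ∨ (v + s • w) j = (u j : ℝ)) ∧
         ¬(v j = (l j : ℝ) ∨ v j = (u j : ℝ)))) := by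
  set T : Set ℝ := {s | 0 ≤ s ∧ A.mulVec (v + s • w) ≤ 0 ∧ v + s • w ∈ intBox l u} with hT
  have h0T : (0 : ℝ) ∈ T := ⟨le_refl 0, by simpa using hvC, by simpa using hvB⟩
  have hcont : Continuous (fun s : ℝ => v + s • w) :=
    continuous_const.add (continuous_id.smul continuous_const)
  have hTclosed : IsClosed T := by
    have : T = Ici (0:ℝ) ∩ ((fun s : ℝ => v + s • w) ⁻¹'
        ({d : Fin n → ℝ | A.mulVec d ≤ 0} ∩ intBox l u)) := by
      ext s; simp [hT, Set.mem_preimage, and_assoc]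
    rw [this]
    exact isClosed_Ici.inter (((isClosed_cone A).inter (isClosed_intBox l u)).preimage hcont)
  obtain ⟨j0, hj0⟩ : ∃ j0, w j0 ≠ 0 := by
    by_contra hc
    push_neg at hc
    exact hwne (funext hc)
  set M : ℝ := ((u j0 : ℝ) - (l j0 : ℝ)) / |w j0| with hM
  have hTsub : T ⊆ Icc 0 M := by
    rintro s ⟨hs0, _, hsB⟩
    refine ⟨hs0, ?_⟩
    have h1 := (hsB j0).1
    have h2 := (hsB j0).2
    have h3 := (hvB j0).1
    have h4 := (hvB j0).2
    have h5 : (v + s • w) j0 = v j0 + s * w j0 := by simp [smul_eq_mul]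
    rw [h5] at h1 h2
    have habs : |s * w j0| ≤ (u j0 : ℝ) - (l j0 : ℝ) := by
      rw [abs_le]; constructor <;> linarith
    rw [abs_mul] at habs
    rw [hM, le_div_iff₀ (abs_pos.mpr hj0)]
    calc s * |w j0| = |s| * |w j0| := by rw [abs_of_nonneg hs0]
      _ ≤ _ := habs
  have hTcpt : IsCompact T := isCompact_Icc.of_isClosed_subset hTclosed hTsub
  set s' : ℝ := sSup T with hs'
  have hs'T : s' ∈ T := hTcpt.sSup_mem ⟨0, h0T⟩
  have hs'pos : 0 < s' := by
    obtain ⟨ε, hε, hεmem⟩ := eps_step A l u v w hvC hvB hw_rows hw_coords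
    have hεT : ε ∈ T := by
      refine ⟨le_of_lt hε, ?_, ?_⟩
      · exact (hεmem ε (by rw [abs_of_pos hε])).1
      · exact (hεmem ε (by rw [abs_of_pos hε])).2
    have := le_csSup hTcpt.bddAbove hεT
    linarith
  refine ⟨s', hs'pos, hs'T.2.1, hs'T.2.2, ?_⟩
  by_contra hnew
  push_neg at hnew
  obtain ⟨hnrow, hncoord⟩ := hnew
  have hrow' : ∀ i, A.mulVec (v + s' • w) i = 0 → A.mulVec w i = 0 := fun i hi =>
    hw_rows i (hnrow i hi)
  have hcoord' : ∀ j, ((v + s' • w) j = (l j : ℝ) ∨ (v + s' • w) j = (u j : ℝ)) → w j = 0 :=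
    fun j hj => hw_coords j (hncoord j hj)
  obtain ⟨ε', hε', hε'mem⟩ := eps_step A l u (v + s' • w) w hs'T.2.1 hs'T.2.2 hrow' hcoord'
  have hmem := hε'mem ε' (by rw [abs_of_pos hε'])
  have hT' : s' + ε' ∈ T := by
    have heq : v + (s' + ε') • w = (v + s' • w) + ε' • w := by
      rw [add_smul]; abel
    exact ⟨by linarith, by rw [heq]; exact hmem.1, by rw [heq]; exact hmem.2⟩
  have := le_csSup hTcpt.bddAbove hT'
  linarith

/-- OUTER INDUCTION: every point of cone ∩ box is in the hull of its integer points -/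
theorem cone_box_sub (A : Matrix (Fin m) (Fin n) ℝ) (b : Fin m → ℝ)
    (hPne : ({x : Fin n → ℝ | A.mulVec x ≤ b}).Nonempty)
    (hbox : IsBoxInteger {x : Fin n → ℝ | A.mulVec x ≤ b})
    (l u : Fin n → ℤ) (hlu : l ≤ u) :
    ∀ N : ℕ, ∀ v : Fin n → ℝ, A.mulVec v ≤ 0 → v ∈ intBox l u →
    ((Finset.univ.filter (fun i => A.mulVec v i ≠ 0)).card
      + (Finset.univ.filter (fun j => ¬(v j = (l j : ℝ) ∨ v j = (u j : ℝ)))).card ≤ N) →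
    v ∈ convexHull ℝ (intPts ({d : Fin n → ℝ | A.mulVec d ≤ 0} ∩ intBox l u)) := by
  intro N
  induction N with
  | zero =>
    intro v hvC hvB hcard
    have hrank : ∀ w : Fin n → ℝ, (∀ i, A.mulVec v i = 0 → A.mulVec w i = 0) →
        (∀ j, (v j = (l j : ℝ) ∨ v j = (u j : ℝ)) → w j = 0) → w = 0 := by
      intro w _ hcw
      have hempty : (Finset.univ.filter
          (fun j => ¬(v j = (l j : ℝ) ∨ v j = (u j : ℝ)))).card = 0 := by omega
      rw [Finset.card_eq_zero, Finset.filter_eq_empty_iff] at hempty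
      funext j
      have h2 := hempty (Finset.mem_univ j)
      rw [not_not] at h2
      exact hcw j h2
    have hint := main_rank A b hPne hbox l u hlu v hvC hvB hrank
    exact subset_convexHull ℝ _ ⟨⟨hvC, hvB⟩, hint⟩
  | succ N ih =>
    intro v hvC hvB hcard
    by_cases hrank : ∀ w : Fin n → ℝ, (∀ i, A.mulVec v i = 0 → A.mulVec w i = 0) →
        (∀ j, (v j = (l j : ℝ) ∨ v j = (u j : ℝ)) → w j = 0) → w = 0
    · have hint := main_rank A b hPne hbox l u hlu v hvC hvB hrank
      exact subset_convexHull ℝ _ ⟨⟨hvC, hvB⟩, hint⟩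
    push_neg at hrank
    obtain ⟨w, hw_rows, hw_coords, hwne⟩ := hrank
    have hw_rows' : ∀ i, A.mulVec v i = 0 → A.mulVec (-w) i = 0 := by
      intro i hi
      have : A.mulVec (-w) = -(A.mulVec w) := by rw [Matrix.mulVec_neg]
      rw [this, Pi.neg_apply, hw_rows i hi, neg_zero]
    have hw_coords' : ∀ j, (v j = (l j : ℝ) ∨ v j = (u j : ℝ)) → (-w) j = 0 := by
      intro j hj; rw [Pi.neg_apply, hw_coords j hj, neg_zero]
    have hwne' : (-w) ≠ 0 := fun hc => hwne (by simpa using congrArg Neg.neg hc)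
    obtain ⟨sp, hsp, hpC, hpB, hpnew⟩ :=
      endpoint A l u v w hvC hvB hw_rows hw_coords hwne
    obtain ⟨sm, hsm, hmC, hmB, hmnew⟩ :=
      endpoint A l u v (-w) hvC hvB hw_rows' hw_coords' hwne'
    set p : Fin n → ℝ := v + sp • w with hp
    set q : Fin n → ℝ := v + sm • (-w) with hq
    -- tightness monotonicity
    have hrowmono : ∀ (s : ℝ), ∀ i, A.mulVec v i = 0 → A.mulVec (v + s • w) i = 0 := by
      intro s i hi
      have h1 : A.mulVec (v + s • w) i = A.mulVec v i + s * A.mulVec w i := by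
        rw [Matrix.mulVec_add, Matrix.mulVec_smul]; simp [smul_eq_mul]
      rw [h1, hi, hw_rows i hi, mul_zero, add_zero]
    have hcoordmono : ∀ (s : ℝ), ∀ j, (v j = (l j : ℝ) ∨ v j = (u j : ℝ)) →
        (v + s • w) j = v j := by
      intro s j hj
      have : (v + s • w) j = v j + s * w j := by simp [smul_eq_mul]
      rw [this, hw_coords j hj, mul_zero, add_zero]
    have measure_lt : ∀ (x : Fin n → ℝ), (∀ i, A.mulVec v i = 0 → A.mulVec x i = 0) →
        (∀ j, (v j = (l j : ℝ) ∨ v j = (u j : ℝ)) → x j = v j) →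
        ((∃ i, A.mulVec x i = 0 ∧ A.mulVec v i ≠ 0) ∨
         (∃ j, (x j = (l j : ℝ) ∨ x j = (u j : ℝ)) ∧ ¬(v j = (l j : ℝ) ∨ v j = (u j : ℝ)))) →
        (Finset.univ.filter (fun i => A.mulVec x i ≠ 0)).card
          + (Finset.univ.filter (fun j => ¬(x j = (l j : ℝ) ∨ x j = (u j : ℝ)))).card ≤ N := by
      intro x hxr hxc hnew
      have hsub1 : (Finset.univ.filter (fun i => A.mulVec x i ≠ 0)) ⊆
          (Finset.univ.filter (fun i => A.mulVec v i ≠ 0)) := by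
        intro i hi
        rw [Finset.mem_filter] at hi ⊢
        exact ⟨hi.1, fun hc => hi.2 (hxr i hc)⟩
      have hsub2 : (Finset.univ.filter (fun j => ¬(x j = (l j : ℝ) ∨ x j = (u j : ℝ)))) ⊆
          (Finset.univ.filter (fun j => ¬(v j = (l j : ℝ) ∨ v j = (u j : ℝ)))) := by
        intro j hj
        rw [Finset.mem_filter] at hj ⊢
        refine ⟨hj.1, fun hc => hj.2 ?_⟩
        rw [hxc j hc]; exact hc
      rcases hnew with ⟨i0, hi0x, hi0v⟩ | ⟨j0, hj0x, hj0v⟩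
      · have hssub : (Finset.univ.filter (fun i => A.mulVec x i ≠ 0)) ⊂
            (Finset.univ.filter (fun i => A.mulVec v i ≠ 0)) := by
          refine Finset.ssubset_iff_of_subset hsub1 |>.mpr ?_
          exact ⟨i0, Finset.mem_filter.mpr ⟨Finset.mem_univ _, hi0v⟩,
            fun hc => (Finset.mem_filter.mp hc).2 hi0x⟩
        have h1 := Finset.card_lt_card hssub
        have h2 := Finset.card_le_card hsub2
        omega
      · have hssub : (Finset.univ.filter (fun j => ¬(x j = (l j : ℝ) ∨ x j = (u j : ℝ)))) ⊂
            (Finset.univ.filter (fun j => ¬(v j = (l j : ℝ) ∨ v j = (u j : ℝ)))) := by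
          refine Finset.ssubset_iff_of_subset hsub2 |>.mpr ?_
          exact ⟨j0, Finset.mem_filter.mpr ⟨Finset.mem_univ _, hj0v⟩,
            fun hc => (Finset.mem_filter.mp hc).2 hj0x⟩
        have h1 := Finset.card_lt_card hssub
        have h2 := Finset.card_le_card hsub1
        omega
    have hpmem := ih p hpC hpB (measure_lt p (hrowmono sp) (hcoordmono sp) hpnew)
    have hqmem : q ∈ convexHull ℝ (intPts ({d : Fin n → ℝ | A.mulVec d ≤ 0} ∩ intBox l u)) := by
      apply ih q hmC hmB
      apply measure_lt q
      · intro i hi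
        have h1 : A.mulVec (v + sm • (-w)) i = A.mulVec v i + sm * A.mulVec (-w) i := by
          rw [Matrix.mulVec_add, Matrix.mulVec_smul]; simp [smul_eq_mul]
        rw [hq, h1, hi, hw_rows' i hi, mul_zero, add_zero]
      · intro j hj
        have : (v + sm • (-w)) j = v j + sm * (-w) j := by simp [smul_eq_mul]
        rw [hq, this, hw_coords' j hj, mul_zero, add_zero]
      · exact hmnew
    -- v is a convex combination of p and q
    have hcomb : v = (sm / (sp + sm)) • p + (sp / (sp + sm)) • q := by
      rw [hp, hq]
      have hspm : sp + sm ≠ 0 := by positivity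
      funext j
      simp only [Pi.add_apply, Pi.smul_apply, smul_eq_mul, Pi.neg_apply]
      field_simp
      ring
    rw [hcomb]
    have hspm : sp + sm > 0 := by positivity
    exact (convex_convexHull ℝ _) hpmem hqmem
      (by positivity) (by positivity)
      (by field_simp; ring)

end Main

/-- The characteristic cone of a box-integer polyhedron is itself a
box-integer polyhedron. -/
theorem charCone_boxInteger {n : ℕ} (P : Set (Fin n → ℝ))
    (hP : IsPolyhedron P) (hbox : IsBoxInteger P) :
    IsPolyhedron (charCone P) ∧ IsBoxInteger (charCone P) := by
  obtain ⟨hne, m, A, b, hPrep⟩ := hP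
  have hne' : ({x | A.mulVec x ≤ b} : Set (Fin n → ℝ)).Nonempty := hPrep ▸ hne
  have hbox' : IsBoxInteger {x : Fin n → ℝ | A.mulVec x ≤ b} := hPrep ▸ hbox
  have hrep : charCone P = {d : Fin n → ℝ | A.mulVec d ≤ 0} := by
    rw [hPrep]
    exact charCone_rep' A b hne'
  constructor
  · refine ⟨⟨0, ?_⟩, m, A, 0, hrep⟩
    rw [hrep]
    show A.mulVec 0 ≤ 0
    rw [Matrix.mulVec_zero]
  · intro l u hlu hne2
    rw [hrep]
    apply Set.Subset.antisymm
    · rintro v ⟨hvC, hvB⟩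
      exact cone_box_sub A b hne' hbox' l u hlu _ v hvC hvB le_rfl
    · refine convexHull_min (fun x hx => hx.1) ?_
      exact (convex_cone A).inter (convex_intBox l u)
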